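/- Let A be an n×n complex matrix all of whose eigenvalues have modulus strictly less than 1, B an n×m complex matrix, C an m×n complex matrix, and D an invertible m×m complex matrix, such that the (n+m)×(n+m) block matrix [[A, B], [C, D]] is unitary (its conjugate transpose times itself equals I, and it times its conjugate transpose equals I). Suppose A is invertible. Let z₀ ∈ ℂ with |z₀| > 1 be such that z₀I − A and z₀I − (Aᴴ)⁻¹ are invertible. Define M(z) = C(zI − A)⁻¹B + D, and let e_j ∈ ℂ^m be the j-th standard basis vector. Then M(e^{iθ}) and M(z₀) are invertible, and (1/2π) ∫_{−π}^{π} ‖(M(e^{iθ})⁻¹ − D⁻¹)e_j‖² dθ + (|z₀|² − 1)·‖(M(z₀)⁻¹ − D⁻¹)e_j‖² = e_jᴴ (Dᴴ)⁻¹Bᴴ (z̄₀I − A⁻¹)⁻¹ (z₀A⁻¹ − I)(z̄₀(Aᴴ)⁻¹ − I) (z₀I − (Aᴴ)⁻¹)⁻¹ B D⁻¹ e_j. -/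

import Mathlib

open MeasureTheory Matrix

section helpers

lemma aux_diff_prod {ι : Type*} (s : Finset ι) (f : ι → ℂ → ℂ)
    (h : ∀ i ∈ s, Differentiable ℂ (f i)) :
    Differentiable ℂ (fun z => ∏ i ∈ s, f i z) := by
  classical
  induction s using Finset.induction with
  | empty => simp
  | @insert a s ha ih =>
    simp only [Finset.prod_insert ha]
    exact (h a (Finset.mem_insert_self a s)).mul
      (ih (fun i hi => h i (Finset.mem_insert_of_mem hi)))

lemma aux_diff_det {k : ℕ} (M : ℂ → Matrix (Fin k) (Fin k) ℂ)
    (h : ∀ i j, Differentiable ℂ fun z => M z i j) :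
    Differentiable ℂ fun z => (M z).det := by
  simp only [Matrix.det_apply]
  apply Differentiable.fun_sum
  intro σ _
  simp only [Units.smul_def, zsmul_eq_mul]
  exact (differentiable_const _).mul (aux_diff_prod _ _ (fun i _ => h _ _))

lemma aux_smul_unit {k : ℕ} {c : ℂ} (hc : c ≠ 0) {M : Matrix (Fin k) (Fin k) ℂ}
    (hM : IsUnit M) : IsUnit (c • M) := by
  rw [Matrix.isUnit_iff_isUnit_det] at hM ⊢
  rw [Matrix.det_smul, isUnit_iff_ne_zero] at *
  exact mul_ne_zero (pow_ne_zero _ hc) hM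

lemma aux_unit {k : ℕ} (X : Matrix (Fin k) (Fin k) ℂ) (hX : IsUnit X)
    (hs : ∀ μ ∈ spectrum ℂ X, ‖μ‖ < 1) {z : ℂ} (hz : ‖z‖ ≤ 1) :
    IsUnit (z • (1 : Matrix (Fin k) (Fin k) ℂ) - X⁻¹) := by
  have hXd : IsUnit X.det := (Matrix.isUnit_iff_isUnit_det X).mp hX
  have h1 : (z • X - 1) * X⁻¹ = z • (1 : Matrix (Fin k) (Fin k) ℂ) - X⁻¹ := by
    rw [sub_mul, Matrix.smul_mul, Matrix.mul_nonsing_inv _ hXd, one_mul]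
  have h2 : IsUnit (z • X - 1) := by
    rcases eq_or_ne z 0 with rfl | hz0
    · simpa using isUnit_one.neg
    · have hmem : z⁻¹ ∉ spectrum ℂ X := by
        intro hm
        have h := hs _ hm
        rw [norm_inv] at h
        have hpos : (0:ℝ) < ‖z‖ := norm_pos_iff.mpr hz0
        have : (1:ℝ) ≤ ‖z‖⁻¹ := one_le_inv_iff₀.mpr ⟨hpos, hz⟩
        linarith
      rw [spectrum.notMem_iff, Algebra.algebraMap_eq_smul_one] at hmem
      have heq : z • X - 1 = (-z) • (z⁻¹ • (1 : Matrix (Fin k) (Fin k) ℂ) - X) := by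
        rw [smul_sub, smul_smul]
        rw [show -z * z⁻¹ = -1 by field_simp]
        module
      rw [heq]
      exact aux_smul_unit (neg_ne_zero.mpr hz0) hmem
  exact h1 ▸ h2.mul (Matrix.isUnit_nonsing_inv_iff.mpr hX)

lemma aux_diff_entries {k : ℕ} (G : Matrix (Fin k) (Fin k) ℂ) (i j : Fin k) :
    Differentiable ℂ fun z : ℂ => (z • (1 : Matrix (Fin k) (Fin k) ℂ) - G) i j := by
  simp only [Matrix.sub_apply, Matrix.smul_apply, smul_eq_mul]
  exact (differentiable_id.mul_const _).sub_const _

lemma aux_diffOn {k : ℕ} (G : Matrix (Fin k) (Fin k) ℂ)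
    (hG : ∀ z : ℂ, ‖z‖ ≤ 1 → IsUnit (z • (1 : Matrix (Fin k) (Fin k) ℂ) - G))
    (v w : Fin k → ℂ) :
    DifferentiableOn ℂ
      (fun z => star v ⬝ᵥ ((z • (1 : Matrix (Fin k) (Fin k) ℂ) - G)⁻¹ *ᵥ w))
      (Metric.closedBall (0:ℂ) 1) := by
  have hfun : ∀ z : ℂ, ‖z‖ ≤ 1 →
      star v ⬝ᵥ ((z • (1 : Matrix (Fin k) (Fin k) ℂ) - G)⁻¹ *ᵥ w)
        = ((z • (1 : Matrix (Fin k) (Fin k) ℂ) - G).det)⁻¹ *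
          (star v ⬝ᵥ ((z • (1 : Matrix (Fin k) (Fin k) ℂ) - G).adjugate *ᵥ w)) := by
    intro z hz
    rw [Matrix.inv_def, Ring.inverse_eq_inv', Matrix.smul_mulVec,
      dotProduct_smul, smul_eq_mul]
  intro z hz
  rw [Metric.mem_closedBall, dist_zero_right] at hz
  have hdet : Differentiable ℂ fun z : ℂ => (z • (1 : Matrix (Fin k) (Fin k) ℂ) - G).det :=
    aux_diff_det _ (aux_diff_entries G)
  have hadj : ∀ i j, Differentiable ℂ
      fun z : ℂ => (z • (1 : Matrix (Fin k) (Fin k) ℂ) - G).adjugate i j := by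
    intro i j
    simp only [Matrix.adjugate_apply]
    apply aux_diff_det
    intro a b
    by_cases hab : a = j
    · subst hab; simp only [Matrix.updateRow_self]; exact differentiable_const _
    · simp only [Matrix.updateRow_ne hab]; exact aux_diff_entries G a b
  have hnum : Differentiable ℂ
      fun z : ℂ => star v ⬝ᵥ ((z • (1 : Matrix (Fin k) (Fin k) ℂ) - G).adjugate *ᵥ w) := by
    simp only [dotProduct, Matrix.mulVec, dotProduct]
    apply Differentiable.fun_sum
    intro i _
    apply Differentiable.const_mul
    apply Differentiable.fun_sum
    intro l _
    exact (hadj i l).mul_const _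
  have hdiff : DifferentiableAt ℂ
      (fun z : ℂ => ((z • (1 : Matrix (Fin k) (Fin k) ℂ) - G).det)⁻¹ *
        (star v ⬝ᵥ ((z • (1 : Matrix (Fin k) (Fin k) ℂ) - G).adjugate *ᵥ w))) z := by
    apply DifferentiableAt.mul
    · apply DifferentiableAt.inv (hdet.differentiableAt)
      exact isUnit_iff_ne_zero.mp ((Matrix.isUnit_iff_isUnit_det _).mp (hG z hz))
    · exact hnum.differentiableAt
  apply DifferentiableWithinAt.congr hdiff.differentiableWithinAt
  · intro y hy
    rw [Metric.mem_closedBall, dist_zero_right] at hy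
    exact hfun y hy
  · exact hfun z hz

lemma aux_periodic (g : ℂ → ℂ) :
    Function.Periodic (fun θ : ℝ => Complex.exp (Complex.I * θ) * g (Complex.exp (Complex.I * θ)))
      (2 * Real.pi) := by
  intro θ
  have key : Complex.exp (Complex.I * ((θ:ℂ) + 2 * Real.pi)) = Complex.exp (Complex.I * θ) := by
    rw [mul_add, Complex.exp_add]
    rw [show Complex.I * (2 * (Real.pi:ℂ)) = 2 * Real.pi * Complex.I by ring]
    rw [Complex.exp_two_pi_mul_I, mul_one]
  simp only [Complex.ofReal_add, Complex.ofReal_mul, Complex.ofReal_ofNat, key]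

lemma aux_periodic' (g : ℂ → ℂ) :
    Function.Periodic (fun θ : ℝ => g (Complex.exp (Complex.I * θ))) (2 * Real.pi) := by
  intro θ
  have key : Complex.exp (Complex.I * ((θ:ℂ) + 2 * Real.pi)) = Complex.exp (Complex.I * θ) := by
    rw [mul_add, Complex.exp_add]
    rw [show Complex.I * (2 * (Real.pi:ℂ)) = 2 * Real.pi * Complex.I by ring]
    rw [Complex.exp_two_pi_mul_I, mul_one]
  simp only [Complex.ofReal_add, Complex.ofReal_mul, Complex.ofReal_ofNat, key]

lemma aux_circleMap (θ : ℝ) : circleMap 0 1 θ = Complex.exp (Complex.I * θ) := by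
  simp [circleMap, mul_comm]

lemma aux_shift (f : ℝ → ℂ) (hf : Function.Periodic f (2 * Real.pi)) :
    (∫ θ in (0:ℝ)..(2*Real.pi), f θ) = ∫ θ in (-Real.pi)..Real.pi, f θ := by
  have := hf.intervalIntegral_add_eq (t := -Real.pi) (s := 0)
  rw [zero_add] at this
  rw [← this]
  ring_nf

lemma aux_intzero (g : ℂ → ℂ) (hg : DifferentiableOn ℂ g (Metric.closedBall (0:ℂ) 1)) :
    (∫ θ in (-Real.pi)..Real.pi,
      Complex.exp (Complex.I * θ) * g (Complex.exp (Complex.I * θ))) = 0 := by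
  have hcirc : (∮ z in C((0:ℂ), 1), g z) = 0 := by
    apply Complex.circleIntegral_eq_zero_of_differentiable_on_off_countable zero_le_one
      Set.countable_empty (hg.continuousOn)
    intro z hz
    exact hg.differentiableAt (Metric.closedBall_mem_nhds_of_mem hz.1)
  rw [circleIntegral] at hcirc
  simp only [deriv_circleMap, aux_circleMap, smul_eq_mul] at hcirc
  have heq : ∀ θ : ℝ, Complex.exp (Complex.I * θ) * Complex.I * g (Complex.exp (Complex.I * θ))
      = Complex.I * (Complex.exp (Complex.I * θ) * g (Complex.exp (Complex.I * θ))) := by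
    intro θ; ring
  rw [intervalIntegral.integral_congr (fun θ _ => heq θ)] at hcirc
  rw [intervalIntegral.integral_const_mul] at hcirc
  rcases mul_eq_zero.mp hcirc with h | h
  · exact absurd h Complex.I_ne_zero
  · rw [← aux_shift _ (aux_periodic g)]; exact h

lemma aux_intcauchy (g : ℂ → ℂ) (hg : DifferentiableOn ℂ g (Metric.closedBall (0:ℂ) 1)) :
    (∫ θ in (-Real.pi)..Real.pi, g (Complex.exp (Complex.I * θ)))
      = (2 * Real.pi) * g 0 := by
  have hcirc := hg.circleIntegral_sub_inv_smul (w := 0) (by simp : (0:ℂ) ∈ Metric.ball (0:ℂ) 1)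
  rw [circleIntegral] at hcirc
  simp only [deriv_circleMap, aux_circleMap, smul_eq_mul, sub_zero] at hcirc
  have heq : ∀ θ : ℝ, Complex.exp (Complex.I * θ) * Complex.I *
      ((Complex.exp (Complex.I * θ))⁻¹ * g (Complex.exp (Complex.I * θ)))
      = Complex.I * g (Complex.exp (Complex.I * θ)) := by
    intro θ
    have h0 : Complex.exp (Complex.I * θ) ≠ 0 := Complex.exp_ne_zero _
    field_simp
  rw [intervalIntegral.integral_congr (fun θ _ => heq θ)] at hcirc
  rw [intervalIntegral.integral_const_mul] at hcirc
  rw [aux_shift _ (aux_periodic' g)] at hcirc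
  have : Complex.I * ∫ θ in (-Real.pi)..Real.pi, g (Complex.exp (Complex.I * θ))
      = Complex.I * ((2 * Real.pi) * g 0) := by
    rw [hcirc]; ring
  exact mul_left_cancel₀ Complex.I_ne_zero this

lemma aux_ofReal_integral (f : ℝ → ℝ) (a b : ℝ) :
    ((∫ x in a..b, f x : ℝ) : ℂ) = ∫ x in a..b, (f x : ℂ) :=
  (RCLike.intervalIntegral_ofReal (𝕜 := ℂ)).symm

lemma aux_norm {m : ℕ} (w : Fin m → ℂ) :
    ((∑ i, ‖w i‖ ^ 2 : ℝ) : ℂ) = star w ⬝ᵥ w := by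
  push_cast
  simp only [dotProduct, Pi.star_apply]
  congr 1
  ext i
  rw [Complex.star_def, mul_comm, Complex.mul_conj]
  norm_cast
  simp [Complex.sq_norm]

lemma aux_dot {a b : ℕ} (X : Matrix (Fin a) (Fin b) ℂ) (u : Fin b → ℂ) :
    star (X *ᵥ u) ⬝ᵥ (X *ᵥ u) = star u ⬝ᵥ ((Xᴴ * X) *ᵥ u) := by
  rw [Matrix.star_mulVec, Matrix.dotProduct_mulVec, Matrix.vecMul_vecMul,
    Matrix.dotProduct_mulVec]

lemma aux_sandwich {a b : ℕ} (Y : Matrix (Fin a) (Fin b) ℂ) (Z : Matrix (Fin a) (Fin a) ℂ)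
    (e : Fin b → ℂ) :
    star e ⬝ᵥ ((Yᴴ * Z * Y) *ᵥ e) = star (Y *ᵥ e) ⬝ᵥ (Z *ᵥ (Y *ᵥ e)) := by
  rw [Matrix.star_mulVec, Matrix.mulVec_mulVec, Matrix.dotProduct_mulVec (star e),
    Matrix.dotProduct_mulVec, Matrix.vecMul_vecMul, Matrix.mul_assoc]

end helpers

/-- **Closed form of the optimal cost `J_{Γ,j}` (equation (A.9) of the paper).**
For a stable inner transfer function `M(z) = C (zI − A)⁻¹ B + D` with unitary
realization block, invertible `A` and `D`, a point `z₀` with `|z₀| > 1` such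
that `z₀ I − A` and `z₀ I − (Aᴴ)⁻¹` are invertible, and a standard basis
vector `e_j`:
`M(e^{iθ})` and `M(z₀)` are invertible, and
`(1/2π) ∫ ‖(M(e^{iθ})⁻¹ − D⁻¹) e_j‖² dθ + (|z₀|² − 1)·‖(M(z₀)⁻¹ − D⁻¹) e_j‖²
  = e_jᴴ (Dᴴ)⁻¹ Bᴴ (z̄₀ I − A⁻¹)⁻¹ (z₀ A⁻¹ − I)(z̄₀ (Aᴴ)⁻¹ − I)(z₀ I − (Aᴴ)⁻¹)⁻¹ B D⁻¹ e_j`. -/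
theorem stmt16 {n m : ℕ} (A : Matrix (Fin n) (Fin n) ℂ)
    (B : Matrix (Fin n) (Fin m) ℂ) (C : Matrix (Fin m) (Fin n) ℂ)
    (D : Matrix (Fin m) (Fin m) ℂ)
    (hA : ∀ μ ∈ spectrum ℂ A, ‖μ‖ < 1)
    (hD : IsUnit D)
    (hU1 : (Matrix.fromBlocks A B C D)ᴴ * Matrix.fromBlocks A B C D = 1)
    (hU2 : Matrix.fromBlocks A B C D * (Matrix.fromBlocks A B C D)ᴴ = 1)
    (hAinv : IsUnit A)
    (z₀ : ℂ) (hz₀ : 1 < ‖z₀‖)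
    (h1 : IsUnit (z₀ • (1 : Matrix (Fin n) (Fin n) ℂ) - A))
    (h2 : IsUnit (z₀ • (1 : Matrix (Fin n) (Fin n) ℂ) - (Aᴴ)⁻¹))
    (j : Fin m) :
    (∀ θ : ℝ, IsUnit
        (C * (Complex.exp (Complex.I * θ) • (1 : Matrix (Fin n) (Fin n) ℂ) - A)⁻¹ * B + D)) ∧
    IsUnit (C * (z₀ • (1 : Matrix (Fin n) (Fin n) ℂ) - A)⁻¹ * B + D) ∧
    ((1 / (2 * Real.pi)) *
        (∫ θ in (-Real.pi)..Real.pi,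
          ∑ i : Fin m,
            ‖(((C * (Complex.exp (Complex.I * θ) • (1 : Matrix (Fin n) (Fin n) ℂ) - A)⁻¹ * B + D)⁻¹
                - D⁻¹) *ᵥ Pi.single j 1) i‖ ^ 2)
      + (‖z₀‖ ^ 2 - 1) *
          ∑ i : Fin m,
            ‖(((C * (z₀ • (1 : Matrix (Fin n) (Fin n) ℂ) - A)⁻¹ * B + D)⁻¹ - D⁻¹) *ᵥ
                Pi.single j 1) i‖ ^ 2 : ℝ)
      = (star (Pi.single j 1 : Fin m → ℂ) ⬝ᵥ
          (((Dᴴ)⁻¹ * Bᴴ *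
              ((starRingEnd ℂ z₀) • (1 : Matrix (Fin n) (Fin n) ℂ) - A⁻¹)⁻¹ *
              (z₀ • A⁻¹ - 1) *
              ((starRingEnd ℂ z₀) • (Aᴴ)⁻¹ - 1) *
              (z₀ • (1 : Matrix (Fin n) (Fin n) ℂ) - (Aᴴ)⁻¹)⁻¹ * B * D⁻¹) *ᵥ
            (Pi.single j 1 : Fin m → ℂ))) := by
  classical
  have hDdet : IsUnit D.det := (Matrix.isUnit_iff_isUnit_det D).mp hD
  have hAdet : IsUnit A.det := (Matrix.isUnit_iff_isUnit_det A).mp hAinv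
  have hAH : IsUnit Aᴴ := (Matrix.isUnit_conjTranspose A).mpr hAinv
  have hAHdet : IsUnit (Aᴴ).det := (Matrix.isUnit_iff_isUnit_det _).mp hAH
  set F : Matrix (Fin n) (Fin n) ℂ := (Aᴴ)⁻¹ with hFdef
  have hFH : Fᴴ = A⁻¹ := by
    rw [hFdef, Matrix.conjTranspose_nonsing_inv, Matrix.conjTranspose_conjTranspose]
  have hAF : Aᴴ * F = 1 := Matrix.mul_nonsing_inv _ hAHdet
  have hFA : F * Aᴴ = 1 := Matrix.nonsing_inv_mul _ hAHdet
  have hDD : D * D⁻¹ = 1 := Matrix.mul_nonsing_inv _ hDdet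
  have hDD' : D⁻¹ * D = 1 := Matrix.nonsing_inv_mul _ hDdet
  have hAA : A⁻¹ * A = 1 := Matrix.nonsing_inv_mul _ hAdet
  have hAA' : A * A⁻¹ = 1 := Matrix.mul_nonsing_inv _ hAdet
  -- block identities
  rw [Matrix.fromBlocks_conjTranspose, Matrix.fromBlocks_multiply] at hU1 hU2
  have htb : Matrix.toBlocks₁₁ (1 : Matrix (Fin n ⊕ Fin m) (Fin n ⊕ Fin m) ℂ) = 1 := by
    rw [← Matrix.fromBlocks_one]; exact Matrix.toBlocks_fromBlocks₁₁ _ _ _ _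
  have e11 : Aᴴ * A + Cᴴ * C = 1 := by
    have := congrArg Matrix.toBlocks₁₁ hU1; simpa [htb] using this
  have e12 : Aᴴ * B + Cᴴ * D = 0 := by
    have := congrArg Matrix.toBlocks₁₂ hU1; rw [← Matrix.fromBlocks_one] at this; simp only [Matrix.toBlocks_fromBlocks₁₂] at this; simpa using this
  have f11 : A * Aᴴ + B * Bᴴ = 1 := by
    have := congrArg Matrix.toBlocks₁₁ hU2; simpa [htb] using this
  have f21 : C * Aᴴ + D * Bᴴ = 0 := by
    have := congrArg Matrix.toBlocks₂₁ hU2; rw [← Matrix.fromBlocks_one] at this; simp only [Matrix.toBlocks_fromBlocks₂₁] at this; simpa using this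
  -- derived identities
  have hFeq : F = A - B * D⁻¹ * C := by
    apply Matrix.inv_eq_right_inv
    have hAB : Aᴴ * B = -(Cᴴ * D) := eq_neg_of_add_eq_zero_left e12
    have hABD : Aᴴ * (B * D⁻¹ * C) = -(Cᴴ * C) := by
      calc Aᴴ * (B * D⁻¹ * C) = (Aᴴ * B) * D⁻¹ * C := by
            simp only [Matrix.mul_assoc]
        _ = -(Cᴴ * D) * D⁻¹ * C := by rw [hAB]
        _ = -(Cᴴ * (D * D⁻¹) * C) := by simp only [Matrix.neg_mul, Matrix.mul_assoc]
        _ = -(Cᴴ * C) := by rw [hDD, Matrix.mul_one]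
    rw [Matrix.mul_sub, hABD, sub_neg_eq_add, e11]
  have hDC : D⁻¹ * C = -(Bᴴ * F) := by
    have h1' : C * Aᴴ = -(D * Bᴴ) := eq_neg_of_add_eq_zero_left f21
    have h2' : C = -(D * (Bᴴ * F)) := by
      calc C = C * (Aᴴ * F) := by rw [hAF, Matrix.mul_one]
        _ = (C * Aᴴ) * F := by rw [Matrix.mul_assoc]
        _ = -(D * Bᴴ) * F := by rw [h1']
        _ = -(D * (Bᴴ * F)) := by simp only [Matrix.neg_mul, Matrix.mul_assoc]
    rw [h2', Matrix.mul_neg, ← Matrix.mul_assoc, hDD', Matrix.one_mul]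
  have hGram : Fᴴ * (B * Bᴴ) * F = Fᴴ * F - 1 := by
    have hBB : B * Bᴴ = 1 - A * Aᴴ := eq_sub_of_add_eq' f11
    rw [hBB, Matrix.mul_sub, Matrix.mul_one, Matrix.sub_mul]
    congr 1
    rw [hFH]
    calc A⁻¹ * (A * Aᴴ) * F = ((A⁻¹ * A) * Aᴴ) * F := by simp only [Matrix.mul_assoc]
      _ = 1 := by rw [hAA, Matrix.one_mul, hAF]
  -- inverse formula
  have inv_formula : ∀ z : ℂ, IsUnit (z • (1 : Matrix (Fin n) (Fin n) ℂ) - A) →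
      IsUnit (z • (1 : Matrix (Fin n) (Fin n) ℂ) - F) →
      (C * (z • (1 : Matrix (Fin n) (Fin n) ℂ) - A)⁻¹ * B + D) *
        (D⁻¹ - D⁻¹ * C * (z • (1 : Matrix (Fin n) (Fin n) ℂ) - F)⁻¹ * B * D⁻¹) = 1 := by
    intro z hz1 hz2
    have hz1d := (Matrix.isUnit_iff_isUnit_det _).mp hz1
    have hz2d := (Matrix.isUnit_iff_isUnit_det _).mp hz2
    set P := (z • (1 : Matrix (Fin n) (Fin n) ℂ) - A)⁻¹ with hP
    set Q := (z • (1 : Matrix (Fin n) (Fin n) ℂ) - F)⁻¹ with hQ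
    have hPl : P * (z • (1 : Matrix (Fin n) (Fin n) ℂ) - A) = 1 := Matrix.nonsing_inv_mul _ hz1d
    have hPr : (z • (1 : Matrix (Fin n) (Fin n) ℂ) - A) * P = 1 := Matrix.mul_nonsing_inv _ hz1d
    have hQl : Q * (z • (1 : Matrix (Fin n) (Fin n) ℂ) - F) = 1 := Matrix.nonsing_inv_mul _ hz2d
    have hQr : (z • (1 : Matrix (Fin n) (Fin n) ℂ) - F) * Q = 1 := Matrix.mul_nonsing_inv _ hz2d
    have key : P - Q - P * (B * D⁻¹ * C) * Q = 0 := by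
      have h3 : (z • (1 : Matrix (Fin n) (Fin n) ℂ) - F) -
          (z • (1 : Matrix (Fin n) (Fin n) ℂ) - A) - B * D⁻¹ * C = 0 := by
        rw [hFeq]; abel
      have e1 : P * ((z • (1 : Matrix (Fin n) (Fin n) ℂ) - F) * Q) = P := by
        rw [hQr, Matrix.mul_one]
      have e2 : (P * (z • (1 : Matrix (Fin n) (Fin n) ℂ) - A)) * Q = Q := by
        rw [hPl, Matrix.one_mul]
      calc P - Q - P * (B * D⁻¹ * C) * Q
          = P * ((z • (1 : Matrix (Fin n) (Fin n) ℂ) - F) * Q)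
            - (P * (z • (1 : Matrix (Fin n) (Fin n) ℂ) - A)) * Q
            - P * (B * D⁻¹ * C) * Q := by rw [e1, e2]
        _ = P * (((z • (1 : Matrix (Fin n) (Fin n) ℂ) - F) -
              (z • (1 : Matrix (Fin n) (Fin n) ℂ) - A) - B * D⁻¹ * C) * Q) := by
            simp only [Matrix.mul_sub, Matrix.sub_mul, Matrix.mul_assoc]
        _ = 0 := by rw [h3, Matrix.zero_mul, Matrix.mul_zero]
    have expand : (C * P * B + D) * (D⁻¹ - D⁻¹ * C * Q * B * D⁻¹)
        = 1 + C * (P - Q - P * (B * D⁻¹ * C) * Q) * (B * D⁻¹) := by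
      simp only [Matrix.mul_sub, Matrix.sub_mul, Matrix.add_mul, Matrix.mul_add,
        ← Matrix.mul_assoc, hDD, Matrix.one_mul]
      abel
    rw [expand, key, Matrix.mul_zero, Matrix.zero_mul, add_zero]
  have Munit : ∀ z : ℂ, IsUnit (z • (1 : Matrix (Fin n) (Fin n) ℂ) - A) →
      IsUnit (z • (1 : Matrix (Fin n) (Fin n) ℂ) - F) →
      IsUnit (C * (z • (1 : Matrix (Fin n) (Fin n) ℂ) - A)⁻¹ * B + D) := by
    intro z hz1 hz2
    have h := inv_formula z hz1 hz2
    exact ⟨⟨_, _, h, mul_eq_one_comm.mp h⟩, rfl⟩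
  have diff_eq : ∀ z : ℂ, IsUnit (z • (1 : Matrix (Fin n) (Fin n) ℂ) - A) →
      IsUnit (z • (1 : Matrix (Fin n) (Fin n) ℂ) - F) →
      (C * (z • (1 : Matrix (Fin n) (Fin n) ℂ) - A)⁻¹ * B + D)⁻¹ - D⁻¹
        = Bᴴ * F * (z • (1 : Matrix (Fin n) (Fin n) ℂ) - F)⁻¹ * (B * D⁻¹) := by
    intro z hz1 hz2
    rw [Matrix.inv_eq_right_inv (inv_formula z hz1 hz2), sub_sub_cancel_left]
    rw [show D⁻¹ * C * (z • (1 : Matrix (Fin n) (Fin n) ℂ) - F)⁻¹ * B * D⁻¹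
        = (D⁻¹ * C) * ((z • (1 : Matrix (Fin n) (Fin n) ℂ) - F)⁻¹ * (B * D⁻¹)) from by
          simp only [Matrix.mul_assoc], hDC]
    simp only [Matrix.neg_mul, neg_neg, Matrix.mul_assoc]
  -- units on circle and ball
  have hspecAH : ∀ μ ∈ spectrum ℂ Aᴴ, ‖μ‖ < 1 := by
    intro μ hm
    rw [spectrum.mem_iff, Algebra.algebraMap_eq_smul_one] at hm
    have hnotu : ¬ IsUnit ((star μ) • (1 : Matrix (Fin n) (Fin n) ℂ) - A) := by
      intro hu
      apply hm
      have h' : IsUnit (((star μ) • (1 : Matrix (Fin n) (Fin n) ℂ) - A)ᴴ) :=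
        (Matrix.isUnit_conjTranspose _).mpr hu
      rwa [Matrix.conjTranspose_sub, Matrix.conjTranspose_smul, Matrix.conjTranspose_one,
        star_star] at h'
    have hmem : star μ ∈ spectrum ℂ A := by
      rw [spectrum.mem_iff, Algebra.algebraMap_eq_smul_one]; exact hnotu
    simpa using hA _ hmem
  have hcircA : ∀ z : ℂ, ‖z‖ = 1 → IsUnit (z • (1 : Matrix (Fin n) (Fin n) ℂ) - A) := by
    intro z hz
    have hnm : z ∉ spectrum ℂ A := fun hmm => by
      have := hA z hmm; rw [hz] at this; exact lt_irrefl _ this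
    rw [spectrum.notMem_iff, Algebra.algebraMap_eq_smul_one] at hnm
    exact hnm
  have hballF : ∀ z : ℂ, ‖z‖ ≤ 1 → IsUnit (z • (1 : Matrix (Fin n) (Fin n) ℂ) - F) :=
    fun z hz => aux_unit Aᴴ hAH hspecAH hz
  have hballFH : ∀ z : ℂ, ‖z‖ ≤ 1 → IsUnit (z • (1 : Matrix (Fin n) (Fin n) ℂ) - Fᴴ) :=
    fun z hz => hFH ▸ aux_unit A hAinv hA hz
  have hnorme : ∀ θ : ℝ, ‖Complex.exp (Complex.I * θ)‖ = 1 := by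
    intro θ
    rw [Complex.norm_exp]
    simp
  -- the cost scalar identity
  set e : Fin m → ℂ := Pi.single j 1 with he
  set u : Fin n → ℂ := (B * D⁻¹) *ᵥ e with hudef
  have cost_id : ∀ z : ℂ, IsUnit (z • (1 : Matrix (Fin n) (Fin n) ℂ) - A) →
      IsUnit (z • (1 : Matrix (Fin n) (Fin n) ℂ) - F) →
      ((∑ i : Fin m, ‖(((C * (z • (1 : Matrix (Fin n) (Fin n) ℂ) - A)⁻¹ * B + D)⁻¹ - D⁻¹) *ᵥ e) i‖ ^ 2 : ℝ) : ℂ)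
        = star u ⬝ᵥ ((((star z) • (1 : Matrix (Fin n) (Fin n) ℂ) - Fᴴ)⁻¹ *
            (Fᴴ * F - 1) * (z • (1 : Matrix (Fin n) (Fin n) ℂ) - F)⁻¹) *ᵥ u) := by
    intro z hz1 hz2
    rw [diff_eq z hz1 hz2, ← Matrix.mulVec_mulVec, aux_norm, aux_dot, ← hudef]
    refine congrArg (fun X => star u ⬝ᵥ X *ᵥ u) ?_
    have hconj : ((z • (1 : Matrix (Fin n) (Fin n) ℂ) - F)⁻¹)ᴴ
        = ((star z) • (1 : Matrix (Fin n) (Fin n) ℂ) - Fᴴ)⁻¹ := by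
      rw [Matrix.conjTranspose_nonsing_inv, Matrix.conjTranspose_sub,
        Matrix.conjTranspose_smul, Matrix.conjTranspose_one]
    calc (Bᴴ * F * (z • (1 : Matrix (Fin n) (Fin n) ℂ) - F)⁻¹)ᴴ *
          (Bᴴ * F * (z • (1 : Matrix (Fin n) (Fin n) ℂ) - F)⁻¹)
        = ((star z) • (1 : Matrix (Fin n) (Fin n) ℂ) - Fᴴ)⁻¹ *
            (Fᴴ * (B * Bᴴ) * F) * (z • (1 : Matrix (Fin n) (Fin n) ℂ) - F)⁻¹ := by
          simp only [Matrix.conjTranspose_mul, Matrix.conjTranspose_conjTranspose, hconj,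
            Matrix.mul_assoc]
      _ = ((star z) • (1 : Matrix (Fin n) (Fin n) ℂ) - Fᴴ)⁻¹ *
            (Fᴴ * F - 1) * (z • (1 : Matrix (Fin n) (Fin n) ℂ) - F)⁻¹ := by
          rw [hGram]
  -- pointwise identity on the circle / at z₀
  have point_id : ∀ z : ℂ, z * star z = 1 →
      IsUnit (z • (1 : Matrix (Fin n) (Fin n) ℂ) - F) →
      ((star z) • (1 : Matrix (Fin n) (Fin n) ℂ) - Fᴴ)⁻¹ * (Fᴴ * F - 1) *
          (z • (1 : Matrix (Fin n) (Fin n) ℂ) - F)⁻¹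
        = -(((star z) • (1 : Matrix (Fin n) (Fin n) ℂ) - Fᴴ)⁻¹ * Fᴴ)
          - z • (z • (1 : Matrix (Fin n) (Fin n) ℂ) - F)⁻¹ := by
    intro z hz hzF
    have hconj : (z • (1 : Matrix (Fin n) (Fin n) ℂ) - F)ᴴ
        = (star z) • (1 : Matrix (Fin n) (Fin n) ℂ) - Fᴴ := by
      rw [Matrix.conjTranspose_sub, Matrix.conjTranspose_smul, Matrix.conjTranspose_one]
    have hRunit : IsUnit ((star z) • (1 : Matrix (Fin n) (Fin n) ℂ) - Fᴴ) :=
      hconj ▸ (Matrix.isUnit_conjTranspose _).mpr hzF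
    have hQr : (z • (1 : Matrix (Fin n) (Fin n) ℂ) - F) *
        (z • (1 : Matrix (Fin n) (Fin n) ℂ) - F)⁻¹ = 1 :=
      Matrix.mul_nonsing_inv _ ((Matrix.isUnit_iff_isUnit_det _).mp hzF)
    have hRl : ((star z) • (1 : Matrix (Fin n) (Fin n) ℂ) - Fᴴ)⁻¹ *
        ((star z) • (1 : Matrix (Fin n) (Fin n) ℂ) - Fᴴ) = 1 :=
      Matrix.nonsing_inv_mul _ ((Matrix.isUnit_iff_isUnit_det _).mp hRunit)
    have hsplit : Fᴴ * F - 1 = Fᴴ * (F - z • (1 : Matrix (Fin n) (Fin n) ℂ))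
        + (z • Fᴴ - 1) := by
      rw [Matrix.mul_sub, Matrix.mul_smul, Matrix.mul_one]; abel
    have h2' : z • Fᴴ - (1 : Matrix (Fin n) (Fin n) ℂ)
        = -(z • ((star z) • (1 : Matrix (Fin n) (Fin n) ℂ) - Fᴴ)) := by
      rw [smul_sub, smul_smul, hz, one_smul, neg_sub]
    rw [hsplit, Matrix.mul_add, Matrix.add_mul]
    have t1 : ((star z) • (1 : Matrix (Fin n) (Fin n) ℂ) - Fᴴ)⁻¹ *
        (Fᴴ * (F - z • (1 : Matrix (Fin n) (Fin n) ℂ))) *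
        (z • (1 : Matrix (Fin n) (Fin n) ℂ) - F)⁻¹
        = -(((star z) • (1 : Matrix (Fin n) (Fin n) ℂ) - Fᴴ)⁻¹ * Fᴴ) := by
      rw [show F - z • (1 : Matrix (Fin n) (Fin n) ℂ)
          = -(z • (1 : Matrix (Fin n) (Fin n) ℂ) - F) from (neg_sub _ _).symm]
      simp only [Matrix.mul_neg, Matrix.neg_mul, Matrix.mul_assoc, hQr, Matrix.mul_one]
    have t2 : ((star z) • (1 : Matrix (Fin n) (Fin n) ℂ) - Fᴴ)⁻¹ * (z • Fᴴ - 1) *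
        (z • (1 : Matrix (Fin n) (Fin n) ℂ) - F)⁻¹
        = -(z • (z • (1 : Matrix (Fin n) (Fin n) ℂ) - F)⁻¹) := by
      rw [h2']
      simp only [Matrix.mul_neg, Matrix.neg_mul, Matrix.mul_smul, Matrix.smul_mul]
      rw [hRl, Matrix.one_mul]
    rw [t1, t2]
    abel
  -- circle facts
  have hcircleprod : ∀ θ : ℝ,
      Complex.exp (Complex.I * θ) * star (Complex.exp (Complex.I * θ)) = 1 := by
    intro θ
    rw [Complex.star_def, Complex.mul_conj]
    rw [Complex.normSq_eq_norm_sq, hnorme θ]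
    norm_num
  have hstar_exp : ∀ θ : ℝ, star (Complex.exp (Complex.I * θ))
      = Complex.exp (Complex.I * ((-θ : ℝ) : ℂ)) := by
    intro θ
    rw [Complex.star_def, ← Complex.exp_conj]
    congr 1
    push_cast
    simp [Complex.conj_ofReal]
  -- integrand functions
  have hg1 : DifferentiableOn ℂ
      (fun w : ℂ => star u ⬝ᵥ ((w • (1 : Matrix (Fin n) (Fin n) ℂ) - Fᴴ)⁻¹ *ᵥ (Fᴴ *ᵥ u)))
      (Metric.closedBall (0:ℂ) 1) := aux_diffOn Fᴴ hballFH u (Fᴴ *ᵥ u)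
  have hg2 : DifferentiableOn ℂ
      (fun w : ℂ => star u ⬝ᵥ ((w • (1 : Matrix (Fin n) (Fin n) ℂ) - F)⁻¹ *ᵥ u))
      (Metric.closedBall (0:ℂ) 1) := aux_diffOn F hballF u u
  -- pointwise integrand identity
  have hpt : ∀ θ : ℝ,
      ((∑ i : Fin m, ‖(((C * (Complex.exp (Complex.I * θ) • (1 : Matrix (Fin n) (Fin n) ℂ) - A)⁻¹ * B + D)⁻¹ - D⁻¹) *ᵥ e) i‖ ^ 2 : ℝ) : ℂ)
      = -(star u ⬝ᵥ (((Complex.exp (Complex.I * ((-θ : ℝ) : ℂ))) • (1 : Matrix (Fin n) (Fin n) ℂ) - Fᴴ)⁻¹ *ᵥ (Fᴴ *ᵥ u)))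
        - Complex.exp (Complex.I * θ) *
          (star u ⬝ᵥ ((Complex.exp (Complex.I * θ) • (1 : Matrix (Fin n) (Fin n) ℂ) - F)⁻¹ *ᵥ u)) := by
    intro θ
    have hz1 := hcircA _ (hnorme θ)
    have hz2 := hballF _ (le_of_eq (hnorme θ))
    rw [cost_id _ hz1 hz2, point_id _ (hcircleprod θ) hz2]
    rw [Matrix.sub_mulVec, Matrix.neg_mulVec, Matrix.smul_mulVec, dotProduct_sub,
      dotProduct_neg, dotProduct_smul, smul_eq_mul, ← hstar_exp θ, ← Matrix.mulVec_mulVec]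
  -- the integral
  have hint : ((∫ θ in (-Real.pi)..Real.pi,
      ∑ i : Fin m, ‖(((C * (Complex.exp (Complex.I * θ) • (1 : Matrix (Fin n) (Fin n) ℂ) - A)⁻¹ * B + D)⁻¹ - D⁻¹) *ᵥ e) i‖ ^ 2 : ℝ) : ℂ)
      = (2 * Real.pi) * (star u ⬝ᵥ u) := by
    rw [aux_ofReal_integral]
    rw [intervalIntegral.integral_congr (g := fun θ : ℝ =>
      -(star u ⬝ᵥ (((Complex.exp (Complex.I * ((-θ : ℝ) : ℂ))) • (1 : Matrix (Fin n) (Fin n) ℂ) - Fᴴ)⁻¹ *ᵥ (Fᴴ *ᵥ u)))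
        - Complex.exp (Complex.I * θ) *
          (star u ⬝ᵥ ((Complex.exp (Complex.I * θ) • (1 : Matrix (Fin n) (Fin n) ℂ) - F)⁻¹ *ᵥ u)))
      (fun θ _ => hpt θ)]
    have hcont1 : Continuous (fun θ : ℝ =>
        star u ⬝ᵥ (((Complex.exp (Complex.I * ((-θ : ℝ) : ℂ))) • (1 : Matrix (Fin n) (Fin n) ℂ) - Fᴴ)⁻¹ *ᵥ (Fᴴ *ᵥ u))) := by
      apply ContinuousOn.comp_continuous hg1.continuousOn
      · fun_prop
      · intro θ
        rw [Metric.mem_closedBall, dist_zero_right]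
        exact le_of_eq (hnorme (-θ))
    have hcont2 : Continuous (fun θ : ℝ =>
        Complex.exp (Complex.I * θ) *
          (star u ⬝ᵥ ((Complex.exp (Complex.I * θ) • (1 : Matrix (Fin n) (Fin n) ℂ) - F)⁻¹ *ᵥ u))) := by
      apply Continuous.mul
      · fun_prop
      · apply ContinuousOn.comp_continuous hg2.continuousOn
        · fun_prop
        · intro θ
          rw [Metric.mem_closedBall, dist_zero_right]
          exact le_of_eq (hnorme θ)
    rw [intervalIntegral.integral_sub ((hcont1.fun_neg).intervalIntegrable _ _)
      (hcont2.intervalIntegrable _ _)]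
    rw [intervalIntegral.integral_neg]
    rw [show (∫ θ in (-Real.pi)..Real.pi,
        star u ⬝ᵥ (((Complex.exp (Complex.I * ((-θ : ℝ) : ℂ))) • (1 : Matrix (Fin n) (Fin n) ℂ) - Fᴴ)⁻¹ *ᵥ (Fᴴ *ᵥ u)))
        = ∫ θ in (-Real.pi)..Real.pi,
          star u ⬝ᵥ (((Complex.exp (Complex.I * (θ : ℂ))) • (1 : Matrix (Fin n) (Fin n) ℂ) - Fᴴ)⁻¹ *ᵥ (Fᴴ *ᵥ u)) from by
      rw [intervalIntegral.integral_comp_neg (f := fun t : ℝ =>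
        star u ⬝ᵥ (((Complex.exp (Complex.I * (t : ℂ))) • (1 : Matrix (Fin n) (Fin n) ℂ) - Fᴴ)⁻¹ *ᵥ (Fᴴ *ᵥ u)))]
      norm_num]
    rw [aux_intcauchy _ hg1, aux_intzero _ hg2]
    have h0inv : ((0:ℂ) • (1 : Matrix (Fin n) (Fin n) ℂ) - Fᴴ)⁻¹ = -A := by
      rw [zero_smul, zero_sub, hFH]
      apply Matrix.inv_eq_right_inv
      rw [Matrix.neg_mul, Matrix.mul_neg, neg_neg, hAA]
    rw [h0inv]
    rw [Matrix.mulVec_mulVec, hFH, Matrix.neg_mul, hAA', Matrix.neg_mulVec, Matrix.one_mulVec,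
      dotProduct_neg]
    ring
  -- final assembly
  refine ⟨fun θ => Munit _ (hcircA _ (hnorme θ)) (hballF _ (le_of_eq (hnorme θ))),
    Munit _ h1 h2, ?_⟩
  rw [Complex.ofReal_add, Complex.ofReal_mul, Complex.ofReal_mul, hint, cost_id z₀ h1 h2]
  have hz0c : ((‖z₀‖ ^ 2 - 1 : ℝ) : ℂ) = z₀ * star z₀ - 1 := by
    rw [Complex.star_def, Complex.mul_conj, Complex.normSq_eq_norm_sq]
    push_cast
    ring
  rw [hz0c]
  have hfirst : ((1 / (2 * Real.pi) : ℝ) : ℂ) * ((2 * Real.pi) * (star u ⬝ᵥ u))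
      = star u ⬝ᵥ u := by
    have hpi : ((Real.pi : ℂ)) ≠ 0 := Complex.ofReal_ne_zero.mpr Real.pi_ne_zero
    push_cast
    field_simp
  rw [hfirst]
  -- rewrite the RHS
  simp only [← Complex.star_def, ← hFH]
  have hY : ((Dᴴ)⁻¹ * Bᴴ *
        ((star z₀) • (1 : Matrix (Fin n) (Fin n) ℂ) - Fᴴ)⁻¹ *
        (z₀ • Fᴴ - 1) * ((star z₀) • F - 1) *
        (z₀ • (1 : Matrix (Fin n) (Fin n) ℂ) - F)⁻¹ * B * D⁻¹)
      = (B * D⁻¹)ᴴ *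
        (((star z₀) • (1 : Matrix (Fin n) (Fin n) ℂ) - Fᴴ)⁻¹ *
          ((z₀ • Fᴴ - 1) * ((star z₀) • F - 1)) *
          (z₀ • (1 : Matrix (Fin n) (Fin n) ℂ) - F)⁻¹) * (B * D⁻¹) := by
    rw [Matrix.conjTranspose_mul, Matrix.conjTranspose_nonsing_inv]
    simp only [Matrix.mul_assoc]
    rw [Matrix.conjTranspose_nonsing_inv]
  rw [hY, aux_sandwich, ← hudef]
  -- the z₀ algebraic identity
  have hconj0 : (z₀ • (1 : Matrix (Fin n) (Fin n) ℂ) - F)ᴴ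
      = (star z₀) • (1 : Matrix (Fin n) (Fin n) ℂ) - Fᴴ := by
    rw [Matrix.conjTranspose_sub, Matrix.conjTranspose_smul, Matrix.conjTranspose_one]
  have hR0unit : IsUnit ((star z₀) • (1 : Matrix (Fin n) (Fin n) ℂ) - Fᴴ) :=
    hconj0 ▸ (Matrix.isUnit_conjTranspose _).mpr h2
  have hQ0r : (z₀ • (1 : Matrix (Fin n) (Fin n) ℂ) - F) *
      (z₀ • (1 : Matrix (Fin n) (Fin n) ℂ) - F)⁻¹ = 1 :=
    Matrix.mul_nonsing_inv _ ((Matrix.isUnit_iff_isUnit_det _).mp h2)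
  have hR0l : ((star z₀) • (1 : Matrix (Fin n) (Fin n) ℂ) - Fᴴ)⁻¹ *
      ((star z₀) • (1 : Matrix (Fin n) (Fin n) ℂ) - Fᴴ) = 1 :=
    Matrix.nonsing_inv_mul _ ((Matrix.isUnit_iff_isUnit_det _).mp hR0unit)
  have z0core : ((star z₀) • (1 : Matrix (Fin n) (Fin n) ℂ) - Fᴴ) *
        (z₀ • (1 : Matrix (Fin n) (Fin n) ℂ) - F)
      + (z₀ * star z₀ - 1) • (Fᴴ * F - 1)
      = (z₀ • Fᴴ - 1) * ((star z₀) • F - 1) := by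
    simp only [Matrix.sub_mul, Matrix.mul_sub, Matrix.smul_mul, Matrix.mul_smul, smul_smul,
      Matrix.mul_one, Matrix.one_mul, smul_sub, sub_smul, one_smul]
    module
  have z0conj : (1 : Matrix (Fin n) (Fin n) ℂ)
      + (z₀ * star z₀ - 1) • (((star z₀) • (1 : Matrix (Fin n) (Fin n) ℂ) - Fᴴ)⁻¹ *
          (Fᴴ * F - 1) * (z₀ • (1 : Matrix (Fin n) (Fin n) ℂ) - F)⁻¹)
      = ((star z₀) • (1 : Matrix (Fin n) (Fin n) ℂ) - Fᴴ)⁻¹ *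
          ((z₀ • Fᴴ - 1) * ((star z₀) • F - 1)) *
          (z₀ • (1 : Matrix (Fin n) (Fin n) ℂ) - F)⁻¹ := by
    have hone : ((star z₀) • (1 : Matrix (Fin n) (Fin n) ℂ) - Fᴴ)⁻¹ *
        (((star z₀) • (1 : Matrix (Fin n) (Fin n) ℂ) - Fᴴ) *
          (z₀ • (1 : Matrix (Fin n) (Fin n) ℂ) - F)) *
        (z₀ • (1 : Matrix (Fin n) (Fin n) ℂ) - F)⁻¹ = 1 := by
      rw [← Matrix.mul_assoc, hR0l, Matrix.one_mul, hQ0r]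
    calc (1 : Matrix (Fin n) (Fin n) ℂ)
        + (z₀ * star z₀ - 1) • (((star z₀) • (1 : Matrix (Fin n) (Fin n) ℂ) - Fᴴ)⁻¹ *
            (Fᴴ * F - 1) * (z₀ • (1 : Matrix (Fin n) (Fin n) ℂ) - F)⁻¹)
        = ((star z₀) • (1 : Matrix (Fin n) (Fin n) ℂ) - Fᴴ)⁻¹ *
            ((((star z₀) • (1 : Matrix (Fin n) (Fin n) ℂ) - Fᴴ) *
              (z₀ • (1 : Matrix (Fin n) (Fin n) ℂ) - F))
              + (z₀ * star z₀ - 1) • (Fᴴ * F - 1)) *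
            (z₀ • (1 : Matrix (Fin n) (Fin n) ℂ) - F)⁻¹ := by
          simp only [Matrix.mul_add, Matrix.add_mul, Matrix.mul_smul, Matrix.smul_mul]
          rw [hone]
      _ = _ := by rw [z0core]
  rw [← z0conj]
  rw [Matrix.add_mulVec, Matrix.one_mulVec, Matrix.smul_mulVec, dotProduct_add,
    dotProduct_smul, smul_eq_mul]
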